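/- Let M ≥ 1 and let χ̃ ∈ W_M^+ with χ̃(−1) = −1. Let ρ > 0, let (Ω, 𝒜, μ) be a measure space with μ(Ω) ≤ 2ρ, and let f: Ω → [0,∞) be measurable. Then ρ⁻¹·∫_Ω f dμ ≤ 2·(ρ⁻¹·∫_Ω (−χ̃(−f)) dμ)^{1/M} + ρ⁻¹·∫_Ω (−χ̃(−f)) dμ (as an inequality in [0,∞]). -/

import Mathlib

open MeasureTheory Filter Set
open scoped ENNReal Topology

noncomputable section

/-- The class `W_M^+` of concave, increasing weights `χ : (-∞,0] → (-∞,0]` with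
`χ(0) = 0`, `χ < 0` on `(-∞,0)`, and `|t·χ'(t)| ≤ M·|χ(t)|` at every point `t < 0`
where `χ` is differentiable. -/
def WMPlus (M : ℝ) (χ : ℝ → ℝ) : Prop :=
  ConcaveOn ℝ (Set.Iic 0) χ ∧ StrictMonoOn χ (Set.Iic 0) ∧ (∀ t ≤ (0:ℝ), χ t ≤ 0) ∧
    χ 0 = 0 ∧ (∀ t < (0:ℝ), χ t < 0) ∧
    ∀ t < (0:ℝ), ∀ d : ℝ, HasDerivAt χ d t → |t * d| ≤ M * |χ t|

private lemma neg_rpow_hasDerivAt {M x : ℝ} (hx : x < 0) :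
    HasDerivAt (fun t : ℝ => (-t) ^ (-M)) (M * (-x) ^ (-M - 1)) x := by
  have h1 : HasDerivAt (fun t : ℝ => -t) (-1) x := (hasDerivAt_id x).neg
  have h2 : HasDerivAt (fun y : ℝ => y ^ (-M)) (-M * (-x) ^ (-M - 1)) (-x) :=
    Real.hasDerivAt_rpow_const (Or.inl (by linarith))
  have h3 := h2.comp x h1
  rw [show M * (-x) ^ (-M - 1) = -M * (-x) ^ (-M - 1) * -1 by ring]
  exact h3

private lemma antitoneOn_tendsto_Ioo_right {f : ℝ → ℝ} {x y : ℝ}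
    (h_nonempty : (Ioo x y).Nonempty) (Af : AntitoneOn f (Ioo x y))
    (h_bdd : BddAbove (f '' Ioo x y)) :
    Tendsto f (𝓝[>] x) (𝓝 (sSup (f '' Ioo x y))) :=
  MonotoneOn.tendsto_nhdsWithin_Ioo_right (β := ℝᵒᵈ) h_nonempty Af.dual_right h_bdd

private lemma core_ineq2 (M : ℝ) (χ : ℝ → ℝ) (hχ : WMPlus M χ)
    (hnorm : χ (-1) = -1) {t : ℝ} (ht : t ≤ -1) : χ t ≤ t := by
  obtain ⟨hconc, -, -, h0, -, -⟩ := hχ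
  rcases ht.eq_or_lt with rfl | ht'
  · simp [hnorm]
  · have h := hconc.slope_anti_adjacent (x := t) (y := -1) (z := 0)
      (mem_Iic.mpr (by linarith)) (mem_Iic.mpr le_rfl) ht' (by norm_num)
    rw [h0, hnorm] at h
    have h3 : (0:ℝ) < -1 - t := by linarith
    have h2 : (1:ℝ) ≤ (-1 - χ t) / (-1 - t) := by
      have : (0 - (-1:ℝ)) / (0 - -1) = 1 := by norm_num
      calc (1:ℝ) = (0 - (-1:ℝ)) / (0 - -1) := by norm_num
        _ ≤ _ := h
    rw [le_div_iff₀ h3] at h2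
    linarith
private lemma core_ineq (M : ℝ) (hM : 1 ≤ M) (χ : ℝ → ℝ) (hχ : WMPlus M χ)
    (hnorm : χ (-1) = -1) {t : ℝ} (ht1 : -1 ≤ t) (ht0 : t ≤ 0) :
    χ t ≤ -((-t) ^ M) := by
  obtain ⟨hconc, hmono, hnonpos, h0, hneg, hder⟩ := hχ
  have hM0 : (0:ℝ) < M := lt_of_lt_of_le one_pos hM
  rcases ht0.eq_or_lt with rfl | ht0'
  · simp [h0, Real.zero_rpow hM0.ne']
  -- continuity
  have hcont : ContinuousOn χ (Iio 0) := by
    have h := hconc.continuousOn_interior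
    rwa [interior_Iic] at h
  -- secant monotonicity (fixed base point)
  have secant : ∀ {x u v : ℝ}, x ≤ 0 → u ≤ 0 → v ≤ 0 → u ≠ x → v ≠ x → u ≤ v →
      (χ v - χ x) / (v - x) ≤ (χ u - χ x) / (u - x) := by
    intro x u v hx hu hv hux hvx huv
    have h := hconc.neg.secant_mono (mem_Iic.mpr hx) (mem_Iic.mpr hu) (mem_Iic.mpr hv) hux hvx huv
    simp only [Pi.neg_apply] at h
    have e1 : (-χ u - -χ x) / (u - x) = -((χ u - χ x) / (u - x)) := by ring
    have e2 : (-χ v - -χ x) / (v - x) = -((χ v - χ x) / (v - x)) := by ring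
    rw [e1, e2] at h
    linarith
  -- adjacent slopes
  have slope3 : ∀ {s x u : ℝ}, s < x → x < u → u ≤ 0 →
      (χ u - χ x) / (u - x) ≤ (χ x - χ s) / (x - s) := by
    intro s x u h1 h2 h3
    exact hconc.slope_anti_adjacent (mem_Iic.mpr (by linarith)) (mem_Iic.mpr h3) h1 h2
  -- the right derivative
  set d : ℝ → ℝ := fun x => sSup (slope χ x '' Ioo x 0) with hd
  have hne : ∀ x : ℝ, x < 0 → (Ioo x 0).Nonempty := fun x hx => ⟨x / 2, by linarith, by linarith⟩
  have hslope_le : ∀ {s x : ℝ}, s < x → x < 0 → ∀ u ∈ Ioo x 0,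
      slope χ x u ≤ (χ x - χ s) / (x - s) := by
    intro s x hsx hx0 u hu
    rw [slope_def_field]
    exact slope3 hsx hu.1 hu.2.le
  have hbdd : ∀ x : ℝ, x < 0 → BddAbove (slope χ x '' Ioo x 0) := by
    intro x hx
    refine ⟨(χ x - χ (x - 1)) / (x - (x - 1)), ?_⟩
    rintro y ⟨u, hu, rfl⟩
    exact hslope_le (by linarith) hx u hu
  have hdle : ∀ {s x : ℝ}, s < x → x < 0 → d x ≤ (χ x - χ s) / (x - s) := by
    intro s x hsx hx0
    exact csSup_le ((hne x hx0).image _) (by rintro y ⟨u, hu, rfl⟩; exact hslope_le hsx hx0 u hu)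
  have hanti : ∀ x : ℝ, x < 0 → AntitoneOn (slope χ x) (Ioo x 0) := by
    intro x hx u hu v hv huv
    rw [slope_def_field, slope_def_field]
    exact secant hx.le hu.2.le hv.2.le (ne_of_gt hu.1) (ne_of_gt hv.1) huv
  have hD : ∀ x : ℝ, x < 0 → HasDerivWithinAt χ (d x) (Ici x) x := by
    intro x hx
    rw [hasDerivWithinAt_iff_tendsto_slope, Ici_sdiff_left]
    exact antitoneOn_tendsto_Ioo_right (hne x hx) (hanti x hx) (hbdd x hx)
  -- slope ≤ derivative at differentiability points
  have slope_le_deriv : ∀ {s x : ℝ}, s < x → x ≤ 0 → ∀ {d' : ℝ}, HasDerivAt χ d' s →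
      (χ x - χ s) / (x - s) ≤ d' := by
    intro s x hsx hx0 d' hd'
    have htends : Tendsto (slope χ s) (𝓝[>] s) (𝓝 d') := by
      have h := hasDerivWithinAt_iff_tendsto_slope.mp (hd'.hasDerivWithinAt (s := Ici s))
      rwa [Ici_sdiff_left] at h
    refine ge_of_tendsto htends ?_
    filter_upwards [Ioo_mem_nhdsGT_of_mem (⟨le_rfl, hsx⟩ : s ∈ Ico s x)] with u hu
    rw [slope_def_field]
    exact secant (by linarith) (by linarith [hu.2]) hx0 (ne_of_gt hu.1) (ne_of_gt hsx) hu.2.le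
  -- density of differentiability points
  set φ : ℝ → ℝ := fun s => if s ≤ 0 then χ s else s with hφ
  have hφm : Monotone φ := by
    intro a b hab
    simp only [hφ]
    by_cases ha : a ≤ 0
    · by_cases hb : b ≤ 0
      · rw [if_pos ha, if_pos hb]
        exact hmono.monotoneOn (mem_Iic.mpr ha) (mem_Iic.mpr hb) hab
      · rw [if_pos ha, if_neg hb]
        exact (hnonpos a ha).trans (by linarith)
    · rw [if_neg ha, if_neg (by linarith)]
      exact hab
  have hdiff_exists : ∀ x < (0:ℝ), ∀ δ > (0:ℝ), ∃ s, s ∈ Ioo (x - δ) x ∧ DifferentiableAt ℝ χ s := by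
    intro x hx δ hδ
    by_contra hcon
    push_neg at hcon
    have hsub : Ioo (x - δ) x ⊆ {s | ¬ DifferentiableAt ℝ φ s} := by
      intro s hs hdφ
      refine hcon s hs (hdφ.congr_of_eventuallyEq ?_)
      filter_upwards [Iio_mem_nhds (show s < 0 by linarith [hs.2])] with y hy
      simp only [hφ]
      rw [if_pos (le_of_lt (mem_Iio.mp hy))]
    have hz := measure_mono_null hsub (ae_iff.mp hφm.ae_differentiableAt)
    rw [Real.volume_Ioo] at hz
    rw [ENNReal.ofReal_eq_zero] at hz
    linarith
  -- the key derivative bound at every point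
  have hR3 : ∀ x < (0:ℝ), (-x) * d x ≤ M * (-χ x) := by
    intro x hx
    have hcx : ContinuousAt (fun s => M * (-χ s) / (-s)) x := by
      have hχx : ContinuousAt χ x := hcont.continuousAt (Iio_mem_nhds hx)
      exact (continuousAt_const.mul hχx.neg).div (continuousAt_id.neg) (by simpa using hx.ne)
    have key : d x ≤ M * (-χ x) / (-x) := by
      refine le_of_forall_pos_le_add fun ε hε => ?_
      obtain ⟨δ, hδ, hδ'⟩ := Metric.continuousAt_iff.mp hcx ε hε
      obtain ⟨s, hs, hdiffs⟩ := hdiff_exists x hx δ hδ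
      have hs0 : s < 0 := hs.2.trans hx
      have hda := hdiffs.hasDerivAt
      have h1 : d x ≤ (χ x - χ s) / (x - s) := hdle hs.2 hx
      have h2 : (χ x - χ s) / (x - s) ≤ deriv χ s := slope_le_deriv hs.2 hx.le hda
      have h3 : deriv χ s ≤ M * (-χ s) / (-s) := by
        have habs := hder s hs0 _ hda
        have h4 : (-s) * deriv χ s ≤ M * (-χ s) := by
          have h5 : (-s) * deriv χ s ≤ |s * deriv χ s| := by
            rw [abs_mul]
            calc (-s) * deriv χ s ≤ |s| * |deriv χ s| := by
                  rw [abs_of_neg hs0]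
                  exact mul_le_mul_of_nonneg_left (le_abs_self _) (by linarith)
              _ = _ := rfl
          have h6 : M * |χ s| = M * (-χ s) := by rw [abs_of_neg (hneg s hs0)]
          linarith
        rw [le_div_iff₀ (by linarith : (0:ℝ) < -s)]
        linarith
      have h7 : M * (-χ s) / (-s) ≤ M * (-χ x) / (-x) + ε := by
        have hds : dist s x < δ := by
          rw [Real.dist_eq, abs_of_neg (by linarith [hs.2] : s - x < 0)]
          linarith [hs.1]
        have := hδ' hds
        rw [Real.dist_eq, abs_sub_lt_iff] at this
        linarith [this.1]
      linarith
    calc (-x) * d x ≤ (-x) * (M * (-χ x) / (-x)) :=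
          mul_le_mul_of_nonneg_left key (by linarith)
      _ = M * (-χ x) := by
        have hxne : x ≠ 0 := hx.ne
        field_simp
  -- set up the fencing argument
  set ψ : ℝ → ℝ := fun x => χ x * (-x) ^ (-M) with hψ
  set ψ' : ℝ → ℝ := fun x => d x * (-x) ^ (-M) + χ x * (M * (-x) ^ (-M - 1)) with hψ'
  have hψval : ψ (-1) = -1 := by
    simp only [hψ, neg_neg, Real.one_rpow, hnorm, mul_one]
  have hsub : Icc (-1 : ℝ) t ⊆ Iio 0 := fun x hx => lt_of_le_of_lt hx.2 ht0'
  have hcontψ : ContinuousOn ψ (Icc (-1) t) := by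
    refine ContinuousOn.mul (hcont.mono hsub) ?_
    refine ContinuousOn.rpow_const (continuousOn_id.neg) ?_
    intro x hx
    exact Or.inl (by have := hsub hx; simp only [mem_Iio] at this; simpa using this.ne)
  have hψder : ∀ x ∈ Ico (-1 : ℝ) t, HasDerivWithinAt ψ (ψ' x) (Ici x) x := by
    intro x hx
    have hx0 : x < 0 := hx.2.trans ht0'
    exact (hD x hx0).mul (neg_rpow_hasDerivAt hx0).hasDerivWithinAt
  have hψone : ∀ x ∈ Ico (-1 : ℝ) t, ψ' x ≤ 0 := by
    intro x hx
    have hx0 : x < 0 := hx.2.trans ht0'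
    have hxne : (-x) ≠ 0 := by simpa using hx0.ne
    have e1 : (-x) ^ (-M) = (-x) ^ (-M - 1) * (-x) := by
      calc (-x) ^ (-M) = (-x) ^ (-M - 1 + 1) := by norm_num
        _ = (-x) ^ (-M - 1) * (-x) := Real.rpow_add_one hxne _
    have hpos : (0:ℝ) ≤ (-x) ^ (-M - 1) := Real.rpow_nonneg (by linarith) _
    have h3 := hR3 x hx0
    have e2 : ψ' x = ((-x) * d x + M * χ x) * (-x) ^ (-M - 1) := by
      simp only [hψ']
      rw [e1]; ring
    rw [e2]
    exact mul_nonpos_of_nonpos_of_nonneg (by linarith) hpos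
  have main := image_le_of_deriv_right_le_deriv_boundary (f := ψ) (f' := ψ')
      (a := -1) (b := t) hcontψ hψder (B := fun _ => -1) (B' := fun _ => 0)
      (le_of_eq hψval) continuousOn_const (fun x _ => hasDerivWithinAt_const x _ (-1)) hψone
  have hψt : ψ t ≤ -1 := main (right_mem_Icc.mpr ht1)
  have hP : (0:ℝ) < (-t) ^ M := Real.rpow_pos_of_pos (by linarith) M
  have hdiv : χ t / (-t) ^ M ≤ -1 := by
    rw [div_eq_mul_inv, ← Real.rpow_neg (by linarith : (0:ℝ) ≤ -t)]
    exact hψt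
  rw [div_le_iff₀ hP] at hdiv
  linarith

theorem stmt13 (M : ℝ) (hM : 1 ≤ M) (χt : ℝ → ℝ) (hχt : WMPlus M χt)
    (hnorm : χt (-1) = -1) (ρ : ℝ) (hρ : 0 < ρ)
    {Ω : Type*} [MeasurableSpace Ω] (μ : Measure Ω)
    (hμ : μ Set.univ ≤ ENNReal.ofReal (2 * ρ))
    (f : Ω → ℝ) (hf_meas : Measurable f) (hf_nonneg : ∀ x, 0 ≤ f x) :
    ENNReal.ofReal ρ⁻¹ * ∫⁻ x, ENNReal.ofReal (f x) ∂μ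
      ≤ 2 * (ENNReal.ofReal ρ⁻¹ * ∫⁻ x, ENNReal.ofReal (-(χt (-(f x)))) ∂μ) ^ (1 / M)
        + ENNReal.ofReal ρ⁻¹ * ∫⁻ x, ENNReal.ofReal (-(χt (-(f x)))) ∂μ := by
  have hM0 : (0:ℝ) < M := lt_of_lt_of_le one_pos hM
  have hcore : ∀ {t : ℝ}, -1 ≤ t → t ≤ 0 → χt t ≤ -((-t) ^ M) :=
    fun {t} ht1 ht0 => core_ineq M hM χt hχt hnorm ht1 ht0
  have hcore2 : ∀ {t : ℝ}, t ≤ -1 → χt t ≤ t :=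
    fun {t} ht => core_ineq2 M χt hχt hnorm ht
  obtain ⟨hconc, hmono, hnonpos, h0, hneg, hder⟩ := hχt
  set g : Ω → ℝ≥0∞ := fun x => ENNReal.ofReal (-(χt (-(f x)))) with hg
  -- measurability
  set φ : ℝ → ℝ := fun s => if s ≤ 0 then χt s else s with hφ
  have hφm : Monotone φ := by
    intro a b hab
    simp only [hφ]
    by_cases ha : a ≤ 0
    · by_cases hb : b ≤ 0
      · rw [if_pos ha, if_pos hb]
        exact hmono.monotoneOn (mem_Iic.mpr ha) (mem_Iic.mpr hb) hab
      · rw [if_pos ha, if_neg hb]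
        exact (hnonpos a ha).trans (by linarith)
    · rw [if_neg ha, if_neg (by linarith)]
      exact hab
  have hgm : Measurable g := by
    have he : g = fun x => ENNReal.ofReal (-(φ (-(f x)))) := by
      funext x
      simp only [hg, hφ]
      rw [if_pos (by linarith [hf_nonneg x])]
    rw [he]
    exact ENNReal.measurable_ofReal.comp ((hφm.measurable.comp hf_meas.neg).neg)
  -- pointwise inequality
  have hpt : ∀ x, ENNReal.ofReal (f x) ≤ g x ^ (1/M) + g x := by
    intro x
    have hfx := hf_nonneg x
    have hχnn : (0:ℝ) ≤ -(χt (-(f x))) := by linarith [hnonpos (-(f x)) (by linarith)]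
    rcases le_or_gt (f x) 1 with hle | hgt
    · have h1 := hcore (t := -(f x)) (by linarith) (by linarith)
      rw [neg_neg] at h1
      have h2 : f x ≤ (-(χt (-(f x)))) ^ (1/M) := by
        have h3 : (f x ^ M) ^ (1/M) ≤ (-(χt (-(f x)))) ^ (1/M) :=
          Real.rpow_le_rpow (Real.rpow_nonneg hfx M) (by linarith) (by positivity)
        rwa [← Real.rpow_mul hfx, mul_one_div, div_self hM0.ne', Real.rpow_one] at h3
      calc ENNReal.ofReal (f x) ≤ ENNReal.ofReal ((-(χt (-(f x)))) ^ (1/M)) :=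
            ENNReal.ofReal_le_ofReal h2
        _ = g x ^ (1/M) := (ENNReal.ofReal_rpow_of_nonneg hχnn (by positivity : (0:ℝ) ≤ 1/M)).symm
        _ ≤ _ := le_self_add
    · have h1 := hcore2 (t := -(f x)) (by linarith)
      have h2 : f x ≤ -(χt (-(f x))) := by linarith
      calc ENNReal.ofReal (f x) ≤ g x := ENNReal.ofReal_le_ofReal h2
        _ ≤ _ := le_add_self
  have hpm : Measurable fun x => g x ^ (1/M) := hgm.pow_const _
  have H1 : ∫⁻ x, ENNReal.ofReal (f x) ∂μ ≤ (∫⁻ x, g x ^ (1/M) ∂μ) + ∫⁻ x, g x ∂μ := by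
    calc ∫⁻ x, ENNReal.ofReal (f x) ∂μ ≤ ∫⁻ x, (g x ^ (1/M) + g x) ∂μ := lintegral_mono hpt
      _ = _ := lintegral_add_left hpm _
  set Ig := ∫⁻ x, g x ∂μ with hIg
  have H2 : ∫⁻ x, g x ^ (1/M) ∂μ ≤ Ig ^ (1/M) * (μ Set.univ) ^ (1 - 1/M) := by
    rcases eq_or_lt_of_le hM with hM1 | hM1
    · subst hM1
      norm_num [ENNReal.rpow_one, hIg]
    · have hq := Real.HolderConjugate.conjExponent hM1
      have hHold := ENNReal.lintegral_mul_le_Lp_mul_Lq μ hq hpm.aemeasurable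
        (aemeasurable_const (b := (1:ℝ≥0∞)))
      simp only [Pi.mul_apply, mul_one, ENNReal.one_rpow, lintegral_one] at hHold
      have e3 : ∀ x, (g x ^ (1/M)) ^ M = g x := by
        intro x
        rw [← ENNReal.rpow_mul, one_div, inv_mul_cancel₀ hM0.ne', ENNReal.rpow_one]
      simp_rw [e3] at hHold
      have e4 : 1 / Real.conjExponent M = 1 - 1/M := by
        rw [Real.conjExponent, one_div_div]
        field_simp
      rw [e4] at hHold
      exact hHold
  set R := ENNReal.ofReal ρ with hR
  have hR0 : R ≠ 0 := by
    simp only [hR, ne_eq, ENNReal.ofReal_eq_zero, not_le]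
    exact hρ
  have hRt : R ≠ ⊤ := ENNReal.ofReal_ne_top
  have hr0 : R⁻¹ ≠ 0 := ENNReal.inv_ne_zero.mpr hRt
  have hrt : R⁻¹ ≠ ⊤ := ENNReal.inv_ne_top.mpr hR0
  have hμ2 : μ Set.univ ≤ 2 * R := by
    calc μ Set.univ ≤ ENNReal.ofReal (2 * ρ) := hμ
      _ = 2 * R := by
          rw [ENNReal.ofReal_mul (by norm_num : (0:ℝ) ≤ 2), hR]
          norm_num
  have hainv : ENNReal.ofReal ρ⁻¹ = R⁻¹ := by rw [ENNReal.ofReal_inv_of_pos hρ]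
  rw [hainv]
  have ha0 : (0:ℝ) ≤ 1/M := by positivity
  have hb0 : (0:ℝ) ≤ 1 - 1/M := by
    have h5 : 1/M ≤ 1 := by rw [div_le_one hM0]; exact hM
    linarith
  have key : R⁻¹ * (Ig ^ (1/M) * (2 * R) ^ (1 - 1/M)) ≤ 2 * (R⁻¹ * Ig) ^ (1/M) := by
    have hr1 : R⁻¹ ^ (1/M) * R⁻¹ ^ (1 - 1/M) = R⁻¹ := by
      rw [← ENNReal.rpow_add _ _ hr0 hrt]
      norm_num
    have h2R : R⁻¹ * (2 * R) = 2 := by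
      rw [mul_comm 2 R, ← mul_assoc, ENNReal.inv_mul_cancel hR0 hRt, one_mul]
    calc R⁻¹ * (Ig ^ (1/M) * (2 * R) ^ (1 - 1/M))
        = (R⁻¹ ^ (1/M) * R⁻¹ ^ (1 - 1/M)) * (Ig ^ (1/M) * (2 * R) ^ (1 - 1/M)) := by
          rw [hr1]
      _ = (R⁻¹ * Ig) ^ (1/M) * (R⁻¹ * (2 * R)) ^ (1 - 1/M) := by
          simp only [ENNReal.mul_rpow_of_nonneg _ _ ha0, ENNReal.mul_rpow_of_nonneg _ _ hb0]
          ring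
      _ = (R⁻¹ * Ig) ^ (1/M) * 2 ^ (1 - 1/M) := by rw [h2R]
      _ ≤ (R⁻¹ * Ig) ^ (1/M) * 2 := by
          refine mul_le_mul_right ?_ _
          calc (2:ℝ≥0∞) ^ (1 - 1/M) ≤ 2 ^ (1:ℝ) :=
                ENNReal.rpow_le_rpow_of_exponent_le (by norm_num) (by linarith)
            _ = 2 := ENNReal.rpow_one 2
      _ = 2 * (R⁻¹ * Ig) ^ (1/M) := mul_comm _ _
  calc R⁻¹ * ∫⁻ x, ENNReal.ofReal (f x) ∂μ
      ≤ R⁻¹ * ((∫⁻ x, g x ^ (1/M) ∂μ) + Ig) := mul_le_mul_right H1 _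
    _ = R⁻¹ * (∫⁻ x, g x ^ (1/M) ∂μ) + R⁻¹ * Ig := mul_add _ _ _
    _ ≤ R⁻¹ * (Ig ^ (1/M) * (2 * R) ^ (1 - 1/M)) + R⁻¹ * Ig := by
        refine add_le_add_left (mul_le_mul_right ?_ _) _
        calc (∫⁻ x, g x ^ (1/M) ∂μ) ≤ Ig ^ (1/M) * (μ Set.univ) ^ (1 - 1/M) := H2
          _ ≤ Ig ^ (1/M) * (2 * R) ^ (1 - 1/M) :=
              mul_le_mul_right (ENNReal.rpow_le_rpow hμ2 hb0) _
    _ ≤ 2 * (R⁻¹ * Ig) ^ (1/M) + R⁻¹ * Ig := add_le_add_left key _
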